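/- arXiv:1603.00898 — 4 statements merged into one kernel-verified Lean document; each statement's English description precedes it below -/
import Mathlib

section
/- Let A be an n×m integer matrix with all entries in {-1, 0, 1} such that each column of A contains at most one entry equal to -1 (the fundamental assumption). Let b, c be integer vectors in {0,1}^n. Suppose x ∈ ℤ^m with x ≥ 0 is a 'relaxed solution', i.e., 0 ≤ Ax + b ≤ c (componentwise). Let y ∈ ℤ^m satisfy 0 ≤ y ≤ x and Ay ≥ 0, and suppose y is maximal in the sense that there is no standard unit vector u with y + u ≤ x and A(y + u) ≥ 0. Then x' := x − y also satisfies 0 ≤ Ax' + b ≤ c, i.e., x' is another relaxed solution. -/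
theorem stmt_0 (n m : ℕ) (A : Matrix (Fin n) (Fin m) ℤ)
    (hA : ∀ i j, A i j = -1 ∨ A i j = 0 ∨ A i j = 1)
    (hcol : ∀ j i i', A i j = -1 → A i' j = -1 → i = i')
    (b c : Fin n → ℤ)
    (hb : ∀ i, b i = 0 ∨ b i = 1) (hc : ∀ i, c i = 0 ∨ c i = 1)
    (x : Fin m → ℤ) (hx : 0 ≤ x)
    (hx1 : 0 ≤ A.mulVec x + b) (hx2 : A.mulVec x + b ≤ c)
    (y : Fin m → ℤ) (hy0 : 0 ≤ y) (hyx : y ≤ x) (hAy : 0 ≤ A.mulVec y)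
    (hmax : ∀ j : Fin m, ¬ (y + Pi.single j 1 ≤ x ∧ 0 ≤ A.mulVec (y + Pi.single j 1))) :
    0 ≤ A.mulVec (x - y) + b ∧ A.mulVec (x - y) + b ≤ c := by
  rw [Pi.le_def, Pi.le_def] at *
  have hsub : ∀ i, A.mulVec (x - y) i = A.mulVec x i - A.mulVec y i := by
    intro i; rw [Matrix.mulVec_sub]; rfl
  constructor
  · intro i
    by_contra h
    push_neg at h
    simp only [Pi.add_apply, Pi.zero_apply, hsub] at h
    have hz : ∀ j, 0 ≤ x j - y j := fun j => by linarith [hyx j]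
    have hneg : A.mulVec (x - y) i < 0 := by
      rw [hsub]; rcases hb i with h1 | h1 <;> linarith [hx1 i, hAy i,
        (by simpa using hx1 i : 0 ≤ A.mulVec x i + b i)]
    have hex : ∃ j, A i j = -1 ∧ 0 < x j - y j := by
      by_contra hno
      push_neg at hno
      have : 0 ≤ A.mulVec (x - y) i := by
        rw [Matrix.mulVec, dotProduct]
        apply Finset.sum_nonneg
        intro j _
        rcases hA i j with h1 | h1 | h1
        · have h2 : x j - y j = 0 := le_antisymm (hno j h1) (hz j)
          have : (x - y) j = 0 := h2
          simp [h1, this]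
        · simp [h1]
        · simpa [h1] using hz j
      linarith
    obtain ⟨j, hAij, hzj⟩ := hex
    have hle : y + Pi.single j 1 ≤ x := by
      rw [Pi.le_def]
      intro k
      by_cases hk : k = j
      · subst hk; simp only [Pi.add_apply, Pi.single_eq_same]; linarith
      · simpa [Pi.single_apply, hk] using hyx k
    have hnot : ¬ 0 ≤ A.mulVec (y + Pi.single j 1) := fun hyes => hmax j ⟨hle, hyes⟩
    rw [Pi.le_def] at hnot
    push_neg at hnot
    obtain ⟨i', hi'⟩ := hnot
    have hdecomp : A.mulVec (y + Pi.single j 1) i' = A.mulVec y i' + A i' j := by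
      rw [Matrix.mulVec_add]
      simp [Matrix.mulVec_single]
    rw [hdecomp] at hi'
    simp only [Pi.zero_apply] at hi'
    have hAy' : 0 ≤ A.mulVec y i' := by simpa using hAy i'
    have hAij' : A i' j = -1 := by
      rcases hA i' j with h1 | h1 | h1 <;> simp [h1] at hi' <;> first | rfl | linarith
    have hE : i = i' := hcol j i i' hAij hAij'
    subst hE
    have hy0' : A.mulVec y i = 0 := by linarith
    have hx1' : 0 ≤ A.mulVec x i + b i := by have := hx1 i; simpa using this
    linarith
  · intro i
    simp only [Pi.add_apply, hsub]
    have := hx2 i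
    simp only [Pi.add_apply] at this
    have h2 : 0 ≤ A.mulVec y i := by have := hAy i; simpa using this
    linarith
end

section
/- Let A be an n×m integer matrix with entries in {-1,0,1} such that each column has at most one -1 entry. Let b ∈ {0,1}^n, c ∈ {0,1}^n, and let x ≥ 0 be an integer vector with 0 ≤ Ax + b ≤ c. Let x_k ∈ ℤ^m satisfy 0 ≤ x_k ≤ x, x_k ≠ x, and 0 ≤ A x_k + b ≤ 1 (componentwise, where 1 is the all-ones vector). If z := x − x_k satisfies (Az)_i ≤ −1 for some index i, then there exists a standard unit vector u ≤ z such that A(x_k + u) + b ≥ 0. -/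
theorem stmt_1 (n m : ℕ) (A : Matrix (Fin n) (Fin m) ℤ)
    (hA : ∀ i j, A i j = -1 ∨ A i j = 0 ∨ A i j = 1)
    (hcol : ∀ j i i', A i j = -1 → A i' j = -1 → i = i')
    (b c : Fin n → ℤ)
    (hb : ∀ i, b i = 0 ∨ b i = 1) (hc : ∀ i, c i = 0 ∨ c i = 1)
    (x : Fin m → ℤ) (hx : 0 ≤ x)
    (hx1 : 0 ≤ A.mulVec x + b) (hx2 : A.mulVec x + b ≤ c)
    (xk : Fin m → ℤ) (hxk0 : 0 ≤ xk) (hxkx : xk ≤ x) (hxkne : xk ≠ x)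
    (hxk1 : 0 ≤ A.mulVec xk + b) (hxk2 : A.mulVec xk + b ≤ 1)
    (i : Fin n) (hi : A.mulVec (x - xk) i ≤ -1) :
    ∃ j : Fin m, Pi.single j 1 ≤ x - xk ∧
      0 ≤ A.mulVec (xk + Pi.single j 1) + b := by
  set z := x - xk with hzdef
  have hz : 0 ≤ z := fun j => by simpa [hzdef] using hxkx j
  -- find a column j with negative contribution
  have hsum : ∑ j, A i j * z j ≤ -1 := by
    simpa [Matrix.mulVec, dotProduct] using hi
  have hneg : ∃ j, A i j * z j < 0 := by
    by_contra h
    push_neg at h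
    have : (0:ℤ) ≤ ∑ j, A i j * z j := Finset.sum_nonneg fun j _ => h j
    omega
  obtain ⟨j, hj⟩ := hneg
  have hzj : 0 ≤ z j := hz j
  have hAij : A i j = -1 := by
    rcases hA i j with h | h | h
    · exact h
    · simp [h] at hj
    · nlinarith
  have hzj1 : 1 ≤ z j := by nlinarith
  refine ⟨j, ?_, ?_⟩
  · intro j'
    by_cases h : j' = j
    · subst h; simpa using hzj1
    · simp [Pi.single_apply, h]
      exact hz j'
  · intro i'
    have hexp : (A.mulVec (xk + Pi.single j 1) + b) i'
        = (A.mulVec xk + b) i' + A i' j := by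
      simp [Matrix.mulVec_add, Matrix.mulVec, dotProduct, Pi.single_apply,
        Finset.sum_ite_eq', mul_comm]
      ring
    rw [hexp]
    by_cases hii : i' = i
    · subst hii
      -- (A xk + b) i' ≥ 1
      have hlin : (A.mulVec x + b) i' = (A.mulVec xk + b) i' + A.mulVec z i' := by
        have : x = xk + z := by simp [hzdef]
        rw [this, Matrix.mulVec_add]
        simp [add_comm, add_assoc, add_left_comm]
      have h1 : 0 ≤ (A.mulVec x + b) i' := hx1 i'
      have := hi
      simp only [Pi.add_apply, Pi.zero_apply] at hlin h1 ⊢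
      rw [hAij]
      omega
    · have hAi'j : 0 ≤ A i' j := by
        rcases hA i' j with h | h | h
        · exact absurd (hcol j i' i h hAij) hii
        · omega
        · omega
      have := hxk1 i'
      simp only [Pi.add_apply, Pi.zero_apply] at this ⊢
      omega
end

section
/- Let A be an n×m integer matrix with entries in {-1,0,1}, each column having at most one -1 entry; let b, c ∈ {0,1}^n. Suppose x ≥ 0 is an integer vector with 0 ≤ Ax + b ≤ c, and x_k ∈ ℤ^m satisfies 0 ≤ x_k ≤ x, x_k ≠ x, and 0 ≤ A x_k + b ≤ 1. Let u be a standard unit vector with u ≤ x − x_k and A(x_k + u) + b ≥ 0, and suppose the index i satisfies (A x_k + b)_i = 1 and (Au)_i = 1. Then (A(x − x_k − u))_i ≤ −1, and consequently there exists a standard unit vector v ≤ x − x_k − u with (Av)_i = −1 and (A(x_k + v) + b)_i = 0. -/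
theorem stmt_4 (n m : ℕ) (A : Matrix (Fin n) (Fin m) ℤ)
    (hA : ∀ i j, A i j = -1 ∨ A i j = 0 ∨ A i j = 1)
    (hcol : ∀ j i i', A i j = -1 → A i' j = -1 → i = i')
    (b c : Fin n → ℤ)
    (hb : ∀ i, b i = 0 ∨ b i = 1) (hc : ∀ i, c i = 0 ∨ c i = 1)
    (x : Fin m → ℤ) (hx : 0 ≤ x)
    (hx1 : 0 ≤ A.mulVec x + b) (hx2 : A.mulVec x + b ≤ c)
    (xk : Fin m → ℤ) (hxk0 : 0 ≤ xk) (hxkx : xk ≤ x) (hxkne : xk ≠ x)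
    (hxk1 : 0 ≤ A.mulVec xk + b) (hxk2 : A.mulVec xk + b ≤ 1)
    (j₀ : Fin m) (hu : Pi.single j₀ (1:ℤ) ≤ x - xk)
    (hu0 : 0 ≤ A.mulVec (xk + Pi.single j₀ 1) + b)
    (i : Fin n)
    (hi1 : (A.mulVec xk + b) i = 1)
    (hi2 : A.mulVec (Pi.single j₀ (1:ℤ)) i = 1) :
    A.mulVec (x - xk - Pi.single j₀ 1) i ≤ -1 ∧
    ∃ j : Fin m, Pi.single j 1 ≤ x - xk - Pi.single j₀ 1 ∧
      A.mulVec (Pi.single j 1) i = -1 ∧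
      (A.mulVec (xk + Pi.single j 1) + b) i = 0 := by
  have hw : (0 : Fin m → ℤ) ≤ x - xk - Pi.single j₀ 1 := by
    have : (0 : Fin m → ℤ) ≤ (x - xk) - Pi.single j₀ 1 := sub_nonneg.2 hu
    simpa using this
  have h1 : A.mulVec (x - xk - Pi.single j₀ 1) i ≤ -1 := by
    have e : A.mulVec (x - xk - Pi.single j₀ 1) i
        = (A.mulVec x + b) i - (A.mulVec xk + b) i - A.mulVec (Pi.single j₀ 1) i := by
      simp [Matrix.mulVec_sub, Pi.add_apply, Pi.sub_apply]
      try ring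
    rw [e, hi1, hi2]
    have hcx := hx2 i
    rcases hc i with h | h <;> rw [h] at hcx <;> linarith
  refine ⟨h1, ?_⟩
  have hex : ∃ j, A i j = -1 ∧ 1 ≤ ((x - xk - Pi.single j₀ 1 : Fin m → ℤ) j) := by
    by_contra hcon
    push_neg at hcon
    have hnn : 0 ≤ A.mulVec (x - xk - Pi.single j₀ 1) i := by
      rw [Matrix.mulVec, dotProduct]
      apply Finset.sum_nonneg
      intro j _
      have hwj : 0 ≤ ((x - xk - Pi.single j₀ 1 : Fin m → ℤ) j) := hw j
      rcases hA i j with h | h | h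
      · have hj := hcon j h
        have : ((x - xk - Pi.single j₀ 1 : Fin m → ℤ) j) = 0 := by omega
        simp [h, this]
      · simp [h]
      · simpa [h] using hwj
    linarith
  obtain ⟨j, hj1, hj2⟩ := hex
  refine ⟨j, ?_, ?_, ?_⟩
  · intro j'
    rcases eq_or_ne j' j with rfl | hne
    · simpa [Pi.single_apply] using hj2
    · have := hw j'
      simpa [Pi.single_apply, hne] using this
  · simp [Matrix.mulVec_single, hj1]
  · have : (A.mulVec (xk + Pi.single j 1) + b) i
        = (A.mulVec xk + b) i + A.mulVec (Pi.single j 1) i := by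
      simp [Matrix.mulVec_add]
      try ring
    rw [this, hi1]
    simp [Matrix.mulVec_single, hj1]
end

section
/- Let A be an n×m integer matrix with entries in {-1,0,1}, each column with at most one -1 entry, and b, c ∈ {0,1}^n. Suppose x ≥ 0 is an integer vector with 0 ≤ Ax + b ≤ c, and suppose x_k satisfies 0 ≤ x_k ≤ x, x_k ≠ x, and 0 ≤ A x_k + b ≤ 1. Let U be the set of standard unit vectors u with u ≤ x − x_k and A(x_k + u) + b ≥ 0. Assume U is nonempty but no element u of U satisfies A(x_k + u) + b ≤ 1. Then there exists a nonzero integer vector z with 0 ≤ z ≤ x − x_k and Az ≥ 0. -/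
theorem stmt_10 (n m : ℕ) (A : Matrix (Fin n) (Fin m) ℤ)
    (hA : ∀ i j, A i j = -1 ∨ A i j = 0 ∨ A i j = 1)
    (hcol : ∀ j i i', A i j = -1 → A i' j = -1 → i = i')
    (b c : Fin n → ℤ)
    (hb : ∀ i, b i = 0 ∨ b i = 1) (hc : ∀ i, c i = 0 ∨ c i = 1)
    (x : Fin m → ℤ) (hx : 0 ≤ x)
    (hx1 : 0 ≤ A.mulVec x + b) (hx2 : A.mulVec x + b ≤ c)
    (xk : Fin m → ℤ) (hxk0 : 0 ≤ xk) (hxkx : xk ≤ x) (hxkne : xk ≠ x)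
    (hxk1 : 0 ≤ A.mulVec xk + b) (hxk2 : A.mulVec xk + b ≤ 1)
    (hU : ∃ j : Fin m, Pi.single j 1 ≤ x - xk ∧
      0 ≤ A.mulVec (xk + Pi.single j 1) + b)
    (hnone : ∀ j : Fin m, Pi.single j 1 ≤ x - xk →
      0 ≤ A.mulVec (xk + Pi.single j 1) + b →
      ¬ A.mulVec (xk + Pi.single j 1) + b ≤ 1) :
    ∃ z : Fin m → ℤ, z ≠ 0 ∧ 0 ≤ z ∧ z ≤ x - xk ∧ 0 ≤ A.mulVec z := by
  classical
  have hAe : ∀ (i : Fin n) (j : Fin m), A.mulVec (Pi.single j (1:ℤ)) i = A i j := by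
    intro i j
    simp [Matrix.mulVec_single]
  -- the key "compensating column" step
  have key : ∀ j : Fin m, Pi.single j 1 ≤ x - xk →
      0 ≤ A.mulVec (xk + Pi.single j 1) + b →
      ∃ (i : Fin n) (j' : Fin m), A i j = 1 ∧ A i j' = -1 ∧
        Pi.single j' 1 ≤ x - xk ∧ 0 ≤ A.mulVec (xk + Pi.single j' 1) + b := by
    intro j hj1 hj2
    have hbad := hnone j hj1 hj2
    rw [Pi.le_def] at hbad
    push_neg at hbad
    obtain ⟨i, hi⟩ := hbad
    have hi' : 1 < A.mulVec xk i + A i j + b i := by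
      simpa [Matrix.mulVec_add, hAe] using hi
    have hxk2i : A.mulVec xk i + b i ≤ 1 := by simpa using hxk2 i
    have hxk1i : 0 ≤ A.mulVec xk i + b i := by simpa using hxk1 i
    have hAij : A i j = 1 := by rcases hA i j with h | h | h <;> omega
    have hxkbi : A.mulVec xk i + b i = 1 := by omega
    set w : Fin m → ℤ := x - xk - Pi.single j 1 with hwdef
    -- the row i is deficient on w = x - xk - e_j
    have hdef : A.mulVec w i < 0 := by
      have e : A.mulVec w i
          = (A.mulVec x i + b i) - (A.mulVec xk i + b i) - A i j := by
        rw [hwdef]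
        simp only [Matrix.mulVec_sub, Pi.sub_apply, hAe]
        ring
      have h1 : A.mulVec x i + b i ≤ c i := by simpa using hx2 i
      have hci : c i ≤ 1 := by rcases hc i with h | h <;> omega
      rw [e, hAij, hxkbi]
      omega
    have hw : ∀ j', 0 ≤ w j' := by
      intro j'
      have := hj1 j'
      rw [hwdef]
      simp only [Pi.sub_apply] at this ⊢
      omega
    have hsumdef : ∑ j', A i j' * w j' < 0 := by
      simpa [Matrix.mulVec, dotProduct] using hdef
    have hex : ∃ j', A i j' * w j' < 0 := by
      by_contra hcon
      push_neg at hcon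
      have : (0:ℤ) ≤ ∑ j', A i j' * w j' :=
        Finset.sum_nonneg fun j' _ => hcon j'
      omega
    obtain ⟨j', hj'⟩ := hex
    have hwj' := hw j'
    have hAij' : A i j' = -1 := by
      rcases hA i j' with h | h | h
      · exact h
      · rw [h] at hj'; omega
      · rw [h] at hj'; omega
    have hwpos : 1 ≤ w j' := by
      rw [hAij'] at hj'; omega
    refine ⟨i, j', hAij, hAij', ?_, ?_⟩
    · intro j''
      simp only [Pi.sub_apply]
      rcases eq_or_ne j'' j' with heq | hne
      · rw [heq, Pi.single_eq_same]
        have hww : w j' = x j' - xk j' - (Pi.single j (1:ℤ) : Fin m → ℤ) j' := by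
          rw [hwdef]; simp
        have hsj : (0:ℤ) ≤ (Pi.single j (1:ℤ) : Fin m → ℤ) j' := by
          rcases eq_or_ne j' j with rfl | h
          · simp
          · simp [Pi.single_eq_of_ne h]
        linarith
      · rw [Pi.single_eq_of_ne hne]
        have := hxkx j''
        linarith
    · intro i''
      have e : (A.mulVec (xk + Pi.single j' 1) + b) i''
          = (A.mulVec xk i'' + b i'') + A i'' j' := by
        simp only [Matrix.mulVec_add, Pi.add_apply, hAe]
        ring
      simp only [Pi.zero_apply]
      rw [e]
      rcases eq_or_ne i'' i with rfl | hne
      · rw [hxkbi, hAij']; norm_num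
      · have hge : 0 ≤ A i'' j' := by
          rcases hA i'' j' with h | h | h
          · exact absurd (hcol j' i'' i h hAij') hne
          · omega
          · omega
        have := hxk1 i''
        simp only [Pi.add_apply, Pi.zero_apply] at this
        omega
  -- package into a self-map of the subtype of good columns
  obtain ⟨j0, hj01, hj02⟩ := hU
  set G := {j : Fin m // Pi.single j 1 ≤ x - xk ∧ 0 ≤ A.mulVec (xk + Pi.single j 1) + b}
    with hG
  have key' : ∀ g : G, ∃ q : Fin n × G, A q.1 g.1 = 1 ∧ A q.1 q.2.1 = -1 := by
    rintro ⟨j, hj1, hj2⟩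
    obtain ⟨i, j', h1, h2, h3, h4⟩ := key j hj1 hj2
    exact ⟨⟨i, ⟨j', h3, h4⟩⟩, h1, h2⟩
  choose q hq1 hq2 using key'
  set f : G → G := fun g => (q g).2 with hf
  set g0 : G := ⟨j0, hj01, hj02⟩ with hg0
  obtain ⟨a, a', haa, heqa⟩ :=
    Finite.exists_ne_map_eq_of_infinite (fun t : ℕ => f^[t] g0)
  obtain ⟨s, t, hst, he⟩ : ∃ s t : ℕ, s < t ∧ f^[s] g0 = f^[t] g0 := by
    rcases haa.lt_or_gt with h | h
    · exact ⟨a, a', h, heqa⟩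
    · exact ⟨a', a, h, heqa.symm⟩
  set u : G := f^[s] g0 with hu
  have hper : Function.IsPeriodicPt f (t - s) u := by
    show f^[t - s] (f^[s] g0) = f^[s] g0
    rw [← Function.iterate_add_apply, Nat.sub_add_cancel hst.le]
    exact he.symm
  set p := Function.minimalPeriod f u with hpdef
  have hp : 0 < p := hper.minimalPeriod_pos (Nat.sub_pos_of_lt hst)
  have hcyc : f^[p] u = u := Function.iterate_minimalPeriod
  have hinjG : Set.InjOn (fun k => f^[k] u) (Set.Iio p) :=
    Function.iterate_injOn_Iio_minimalPeriod
  set cc : ℕ → G := fun k => f^[k] u with hcc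
  have huniq : ∀ k1 ∈ Finset.range p, ∀ k2 ∈ Finset.range p,
      (cc k1).1 = (cc k2).1 → k1 = k2 := by
    intro k1 h1 k2 h2 h
    exact hinjG (Finset.mem_range.mp h1) (Finset.mem_range.mp h2) (Subtype.ext h)
  -- the candidate z
  refine ⟨∑ k ∈ Finset.range p, Pi.single ((cc k).1) (1:ℤ), ?_, ?_, ?_, ?_⟩
  · -- z ≠ 0
    intro h0
    have h1 := congrFun h0 ((cc 0).1)
    rw [Finset.sum_apply] at h1
    have hterm : ∀ k ∈ Finset.range p,
        (0:ℤ) ≤ (Pi.single ((cc k).1) (1:ℤ) : Fin m → ℤ) ((cc 0).1) := by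
      intro k _
      rcases eq_or_ne ((cc 0).1) ((cc k).1) with h | h
      · rw [h, Pi.single_eq_same]; norm_num
      · rw [Pi.single_eq_of_ne h]
    have hone : (1:ℤ) ≤
        ∑ k ∈ Finset.range p, (Pi.single ((cc k).1) (1:ℤ) : Fin m → ℤ) ((cc 0).1) := by
      have h2 : (Pi.single ((cc 0).1) (1:ℤ) : Fin m → ℤ) ((cc 0).1) = 1 :=
        Pi.single_eq_same _ _
      calc (1:ℤ) = (Pi.single ((cc 0).1) (1:ℤ) : Fin m → ℤ) ((cc 0).1) := h2.symm
        _ ≤ _ := Finset.single_le_sum hterm (Finset.mem_range.mpr hp)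
    rw [h1] at hone
    simp at hone
  · -- 0 ≤ z
    refine Finset.sum_nonneg fun k _ => ?_
    intro j''
    simp only [Pi.zero_apply]
    rcases eq_or_ne j'' ((cc k).1) with h | h
    · rw [h, Pi.single_eq_same]; norm_num
    · rw [Pi.single_eq_of_ne h]
  · -- z ≤ x - xk
    intro j''
    rw [Finset.sum_apply]
    simp only [Pi.sub_apply]
    by_cases hex : ∃ k ∈ Finset.range p, (cc k).1 = j''
    · obtain ⟨k0, hk0, hk0e⟩ := hex
      have hs : ∑ k ∈ Finset.range p, (Pi.single ((cc k).1) (1:ℤ) : Fin m → ℤ) j'' = 1 := by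
        rw [Finset.sum_eq_single_of_mem k0 hk0]
        · rw [← hk0e, Pi.single_eq_same]
        · intro k hk hkne
          have hne : (cc k).1 ≠ j'' := by
            intro h
            exact hkne (huniq k hk k0 hk0 (h.trans hk0e.symm))
          rw [Pi.single_eq_of_ne (Ne.symm hne)]
      rw [hs]
      have h1 := (cc k0).2.1 j''
      rw [← hk0e, Pi.single_eq_same] at h1
      rw [← hk0e]
      simpa using h1
    · push_neg at hex
      have hs : ∑ k ∈ Finset.range p, (Pi.single ((cc k).1) (1:ℤ) : Fin m → ℤ) j'' = 0 := by
        refine Finset.sum_eq_zero fun k hk => ?_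
        rw [Pi.single_eq_of_ne (Ne.symm (hex k hk))]
      rw [hs]
      have := hxkx j''
      linarith
  · -- 0 ≤ A z
    intro i
    simp only [Pi.zero_apply]
    have e : A.mulVec (∑ k ∈ Finset.range p, Pi.single ((cc k).1) (1:ℤ)) i
        = ∑ k ∈ Finset.range p, A i ((cc k).1) := by
      rw [← Matrix.mulVecLin_apply, map_sum, Finset.sum_apply]
      refine Finset.sum_congr rfl fun k _ => ?_
      rw [Matrix.mulVecLin_apply, hAe]
    rw [e]
    set N := (Finset.range p).filter (fun k => A i ((cc k).1) = -1) with hN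
    set P := (Finset.range p).filter (fun k => A i ((cc k).1) = 1) with hP
    have hsplit : ∑ k ∈ Finset.range p, A i ((cc k).1)
        = (P.card : ℤ) - (N.card : ℤ) := by
      have hval : ∀ k ∈ Finset.range p, A i ((cc k).1)
          = (if A i ((cc k).1) = 1 then (1:ℤ) else 0)
            - (if A i ((cc k).1) = -1 then (1:ℤ) else 0) := by
        intro k _
        rcases hA i ((cc k).1) with h | h | h <;> rw [h] <;> norm_num
      rw [Finset.sum_congr rfl hval, Finset.sum_sub_distrib,
        Finset.sum_boole, Finset.sum_boole]
    -- the shift map sending a negative position to a positive one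
    have hstep : ∀ k, k < p → cc k = f (cc (if k = 0 then p - 1 else k - 1)) := by
      intro k hk
      rcases eq_or_ne k 0 with rfl | hk0
      · rw [if_pos rfl]
        show cc 0 = f (f^[p-1] u)
        have h1 : p - 1 + 1 = p := by omega
        rw [← Function.iterate_succ_apply' f (p-1) u, Nat.succ_eq_add_one, h1]
        exact hcyc.symm
      · rw [if_neg hk0]
        show f^[k] u = f (f^[k-1] u)
        have h1 : k - 1 + 1 = k := by omega
        rw [← Function.iterate_succ_apply' f (k-1) u, Nat.succ_eq_add_one, h1]
    have hmaps : ∀ k ∈ N, (if k = 0 then p - 1 else k - 1) ∈ P := by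
      intro k hk
      rw [hN, Finset.mem_filter, Finset.mem_range] at hk
      obtain ⟨hkp, hkneg⟩ := hk
      set s' := if k = 0 then p - 1 else k - 1 with hs'
      have hs'p : s' < p := by
        rw [hs']; split <;> omega
      have hcks : cc k = f (cc s') := hstep k hkp
      have hieq : i = (q (cc s')).1 := by
        apply hcol ((cc k).1) i ((q (cc s')).1) hkneg
        rw [hcks]
        exact hq2 (cc s')
      rw [hP, Finset.mem_filter, Finset.mem_range]
      refine ⟨hs'p, ?_⟩
      rw [hieq]
      exact hq1 (cc s')
    have hinjS : Set.InjOn (fun k => if k = 0 then p - 1 else k - 1) ↑N := by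
      intro a1 ha1 a2 ha2 h
      have ha1' := Finset.mem_coe.mp ha1
      have ha2' := Finset.mem_coe.mp ha2
      rw [hN, Finset.mem_filter, Finset.mem_range] at ha1' ha2'
      have h1 : a1 < p := ha1'.1
      have h2 : a2 < p := ha2'.1
      simp only at h
      split_ifs at h <;> omega
    have hcardle : N.card ≤ P.card :=
      Finset.card_le_card_of_injOn _ hmaps hinjS
    rw [hsplit]
    have h2 : (N.card : ℤ) ≤ (P.card : ℤ) := by exact_mod_cast hcardle
    omega
end
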